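/- Let A be a neural ideal of R and let q be a minimal prime of 𝒫(A) (an element of Ideal.minimalPrimes 𝒫(A)) such that there is no index 1 ≤ i ≤ n with both xᵢ ∈ q and yᵢ ∈ q. Then the image ideal d(q) (in Lean, Ideal.map d q) is a minimal prime of A (an element of Ideal.minimalPrimes A). -/

import Mathlib

open MvPolynomial

/-- The pseudomonomial `∏_{i∈σ} xᵢ · ∏_{i∈τ} (1 - xᵢ)` in `F₂[x₁,…,xₙ]`. -/
noncomputable def psm (n : ℕ) (σ τ : Finset (Fin n)) : MvPolynomial (Fin n) (ZMod 2) :=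
  (∏ i ∈ σ, X i) * ∏ i ∈ τ, (1 - X i)

/-- A polynomial of `F₂[x₁,…,xₙ]` is a pseudomonomial if it has the form
`∏_{i∈σ} xᵢ · ∏_{i∈τ} (1 - xᵢ)` for disjoint `σ τ`. -/
def IsPseudomonomial {n : ℕ} (f : MvPolynomial (Fin n) (ZMod 2)) : Prop :=
  ∃ σ τ : Finset (Fin n), Disjoint σ τ ∧ f = psm n σ τ

/-- The canonical form of an ideal `J`: the set of minimal pseudomonomials of `J`,
i.e. pseudomonomials `f ∈ J` such that no pseudomonomial `g ≠ f` dividing `f` lies in `J`. -/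
def CF {n : ℕ} (J : Ideal (MvPolynomial (Fin n) (ZMod 2))) :
    Set (MvPolynomial (Fin n) (ZMod 2)) :=
  {f | IsPseudomonomial f ∧ f ∈ J ∧
    ∀ g : MvPolynomial (Fin n) (ZMod 2), IsPseudomonomial g → g ∣ f → g ≠ f → g ∉ J}
/-- The polarization `𝒫(f) = ∏_{i∈σ} xᵢ · ∏_{i∈τ} yᵢ` in `S = F₂[x₁,…,xₙ,y₁,…,yₙ]`
(the `x`-variables are indexed by `Sum.inl`, the `y`-variables by `Sum.inr`). -/
noncomputable def polMon (n : ℕ) (σ τ : Finset (Fin n)) :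
    MvPolynomial (Fin n ⊕ Fin n) (ZMod 2) :=
  (∏ i ∈ σ, X (Sum.inl i)) * ∏ i ∈ τ, X (Sum.inr i)

/-- The polarization `𝒫(A)` of an ideal `A` of `R`: the ideal of `S` generated by the
polarizations of all pseudomonomials lying in `A`. -/
noncomputable def polIdeal {n : ℕ} (A : Ideal (MvPolynomial (Fin n) (ZMod 2))) :
    Ideal (MvPolynomial (Fin n ⊕ Fin n) (ZMod 2)) :=
  Ideal.span {m | ∃ σ τ : Finset (Fin n), Disjoint σ τ ∧ psm n σ τ ∈ A ∧ m = polMon n σ τ}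

/-- A neural ideal: an ideal of `R` generated by finitely many pseudomonomials. -/
def IsNeuralIdeal {n : ℕ} (A : Ideal (MvPolynomial (Fin n) (ZMod 2))) : Prop :=
  ∃ G : Finset (MvPolynomial (Fin n) (ZMod 2)),
    (∀ f ∈ G, IsPseudomonomial f) ∧ A = Ideal.span (G : Set (MvPolynomial (Fin n) (ZMod 2)))

/-- The depolarization map `d : S → R`, `xᵢ ↦ xᵢ`, `yᵢ ↦ 1 - xᵢ`. -/
noncomputable def depol (n : ℕ) :
    MvPolynomial (Fin n ⊕ Fin n) (ZMod 2) →+* MvPolynomial (Fin n) (ZMod 2) :=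
  (MvPolynomial.aeval (R := ZMod 2) (Sum.elim X (fun i => 1 - X i))).toRingHom
section Aux
variable {R : Type*} [CommRing R] {ι : Type*}

lemma aux_sub_mem (g : ι → MvPolynomial ι R) (J : Ideal (MvPolynomial ι R))
    (h : ∀ i, X i - g i ∈ J) (f : MvPolynomial ι R) : f - aeval g f ∈ J := by
  induction f using MvPolynomial.induction_on with
  | C a => simp [aeval_C, algebraMap_eq]
  | add p r hp hr =>
      rw [map_add]
      simpa [sub_add_sub_comm] using J.add_mem hp hr
  | mul_X p i hp =>
      rw [map_mul, aeval_X]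
      have : p * X i - aeval g p * g i = p * (X i - g i) + (p - aeval g p) * g i := by ring
      rw [this]
      exact J.add_mem (J.mul_mem_left _ (h i)) (J.mul_mem_right _ hp)

lemma span_eq_ker (g : ι → MvPolynomial ι R) (T : Set (MvPolynomial ι R))
    (h1 : ∀ t ∈ T, aeval g t = 0) (h2 : ∀ i, X i - g i ∈ Ideal.span T) :
    Ideal.span T =
      RingHom.ker ((aeval g : MvPolynomial ι R →ₐ[R] MvPolynomial ι R) : MvPolynomial ι R →+* MvPolynomial ι R) := by
  apply le_antisymm
  · rw [Ideal.span_le]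
    intro t ht
    simpa [RingHom.mem_ker] using h1 t ht
  · intro f hf
    have h0 : aeval g f = 0 := by simpa [RingHom.mem_ker] using hf
    have := aux_sub_mem g _ h2 f
    rwa [h0, sub_zero] at this

lemma span_X_image_eq_ker (W : Set ι) [DecidablePred (· ∈ W)] :
    Ideal.span ((X : ι → MvPolynomial ι R) '' W) =
      RingHom.ker ((aeval (fun v => if v ∈ W then 0 else X v) :
        MvPolynomial ι R →ₐ[R] MvPolynomial ι R) : MvPolynomial ι R →+* MvPolynomial ι R) := by
  apply span_eq_ker
  · rintro t ⟨v, hv, rfl⟩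
    simp [hv]
  · intro i
    by_cases hi : i ∈ W
    · simpa [hi] using Ideal.subset_span (Set.mem_image_of_mem X hi)
    · simp [hi]

end Aux

/-- Lemma "primarydecomp", Claim 2: if `q` is a minimal prime of `𝒫(A)` containing no pair
`xᵢ, yᵢ`, then `d(q)` is a minimal prime of `A`. -/
theorem stmt14 {n : ℕ} (hn : 0 < n)
    (A : Ideal (MvPolynomial (Fin n) (ZMod 2))) (hA : IsNeuralIdeal A)
    (q : Ideal (MvPolynomial (Fin n ⊕ Fin n) (ZMod 2)))
    (hq : q ∈ (polIdeal A).minimalPrimes)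
    (hno : ¬∃ i : Fin n, X (Sum.inl i) ∈ q ∧ X (Sum.inr i) ∈ q) :
    Ideal.map (depol n) q ∈ A.minimalPrimes := by
  classical
  obtain ⟨⟨hqp, hqA⟩, hqmin⟩ := hq
  set V : Set (Fin n ⊕ Fin n) := {v | X v ∈ q} with hVdef
  -- kernel description of spans of variables in S
  have hker : ∀ W : Set (Fin n ⊕ Fin n),
      Ideal.span ((X : _ → MvPolynomial (Fin n ⊕ Fin n) (ZMod 2)) '' W) =
      RingHom.ker ((aeval (fun v => if v ∈ W then 0 else X v) :
        MvPolynomial (Fin n ⊕ Fin n) (ZMod 2) →ₐ[ZMod 2] MvPolynomial (Fin n ⊕ Fin n) (ZMod 2)) :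
        MvPolynomial (Fin n ⊕ Fin n) (ZMod 2) →+* MvPolynomial (Fin n ⊕ Fin n) (ZMod 2)) :=
    fun W => span_X_image_eq_ker W
  have hprime : ∀ W : Set (Fin n ⊕ Fin n),
      (Ideal.span ((X : _ → MvPolynomial (Fin n ⊕ Fin n) (ZMod 2)) '' W)).IsPrime := by
    intro W
    rw [hker W]
    exact RingHom.ker_isPrime _
  -- extraction: a monomial in span(X '' W) has a variable in W
  have hvar : ∀ (W : Set (Fin n ⊕ Fin n)) (σ' τ' : Finset (Fin n)),
      polMon n σ' τ' ∈ Ideal.span ((X : _ → MvPolynomial (Fin n ⊕ Fin n) (ZMod 2)) '' W) →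
      (∃ j ∈ σ', Sum.inl j ∈ W) ∨ (∃ j ∈ τ', Sum.inr j ∈ W) := by
    intro W σ' τ' hm
    rw [hker W, RingHom.mem_ker] at hm
    simp only [AlgHom.toRingHom_eq_coe, RingHom.coe_coe, polMon, map_mul, map_prod,
      aeval_X] at hm
    rcases mul_eq_zero.mp hm with h | h
    · left
      obtain ⟨j, hj, hj0⟩ := Finset.prod_eq_zero_iff.mp h
      refine ⟨j, hj, ?_⟩
      by_contra hjW
      rw [if_neg hjW] at hj0
      exact X_ne_zero _ hj0
    · right
      obtain ⟨j, hj, hj0⟩ := Finset.prod_eq_zero_iff.mp h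
      refine ⟨j, hj, ?_⟩
      by_contra hjW
      rw [if_neg hjW] at hj0
      exact X_ne_zero _ hj0
  -- membership: a monomial with a variable in W lies in span(X '' W)
  have hmemvar : ∀ (W : Set (Fin n ⊕ Fin n)) (σ' τ' : Finset (Fin n)) (v : Fin n ⊕ Fin n),
      v ∈ W → ((∃ j ∈ σ', Sum.inl j = v) ∨ (∃ j ∈ τ', Sum.inr j = v)) →
      polMon n σ' τ' ∈ Ideal.span ((X : _ → MvPolynomial (Fin n ⊕ Fin n) (ZMod 2)) '' W) := by
    intro W σ' τ' v hvW hv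
    have hX : (X v : MvPolynomial (Fin n ⊕ Fin n) (ZMod 2)) ∈ Ideal.span (X '' W) :=
      Ideal.subset_span (Set.mem_image_of_mem X hvW)
    have hdvd : (X v : MvPolynomial (Fin n ⊕ Fin n) (ZMod 2)) ∣ polMon n σ' τ' := by
      rw [polMon]
      rcases hv with ⟨j, hj, rfl⟩ | ⟨j, hj, rfl⟩
      · exact Dvd.dvd.mul_right (Finset.dvd_prod_of_mem _ hj) _
      · exact Dvd.dvd.mul_left (Finset.dvd_prod_of_mem _ hj) _
    obtain ⟨c, hc⟩ := hdvd
    rw [hc]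
    exact Ideal.mul_mem_right _ _ hX
  -- q is generated by the variables it contains
  have hqV : q = Ideal.span ((X : _ → MvPolynomial (Fin n ⊕ Fin n) (ZMod 2)) '' V) := by
    have h1 : Ideal.span ((X : _ → MvPolynomial (Fin n ⊕ Fin n) (ZMod 2)) '' V) ≤ q := by
      rw [Ideal.span_le]
      rintro t ⟨v, hv, rfl⟩
      exact hv
    have h2 : polIdeal A ≤ Ideal.span ((X : _ → MvPolynomial (Fin n ⊕ Fin n) (ZMod 2)) '' V) := by
      rw [polIdeal, Ideal.span_le]
      rintro m ⟨σ', τ', hdisj, hpsm, rfl⟩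
      have hmq : polMon n σ' τ' ∈ q :=
        hqA (Ideal.subset_span ⟨σ', τ', hdisj, hpsm, rfl⟩)
      rw [polMon] at hmq
      rcases hqp.mem_or_mem hmq with h | h
      · obtain ⟨j, hj, hjq⟩ := Ideal.IsPrime.prod_mem_iff.mp h
        exact hmemvar V σ' τ' _ hjq (Or.inl ⟨j, hj, rfl⟩)
      · obtain ⟨j, hj, hjq⟩ := Ideal.IsPrime.prod_mem_iff.mp h
        exact hmemvar V σ' τ' _ hjq (Or.inr ⟨j, hj, rfl⟩)
    exact le_antisymm (hqmin ⟨hprime V, h2⟩ h1) h1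
  -- the image of q under depolarization
  set e : (Fin n ⊕ Fin n) → MvPolynomial (Fin n) (ZMod 2) :=
    Sum.elim X (fun i => 1 - X i) with hedef
  have hdX : ∀ v, depol n (X v) = e v := by
    intro v
    simp [depol, hedef]
  have hmap : Ideal.map (depol n) q = Ideal.span (e '' V) := by
    rw [hqV, Ideal.map_span, Set.image_image]
    congr 1
    ext t
    constructor
    · rintro ⟨v, hv, rfl⟩; exact ⟨v, hv, (hdX v).symm⟩
    · rintro ⟨v, hv, rfl⟩; exact ⟨v, hv, (hdX v)⟩
  set g' : Fin n → MvPolynomial (Fin n) (ZMod 2) :=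
    fun i => if Sum.inl i ∈ V then 0 else if Sum.inr i ∈ V then 1 else X i with hg'
  have hsub1 : ∀ j : Fin n, (1 : MvPolynomial (Fin n) (ZMod 2)) - X j ≠ 0 := by
    intro j h
    have := congrArg constantCoeff h
    simp at this
  have hpker : Ideal.span (e '' V) =
      RingHom.ker ((aeval g' : MvPolynomial (Fin n) (ZMod 2) →ₐ[ZMod 2] MvPolynomial (Fin n) (ZMod 2)) :
        MvPolynomial (Fin n) (ZMod 2) →+* MvPolynomial (Fin n) (ZMod 2)) := by
    apply span_eq_ker
    · rintro t ⟨v, hv, rfl⟩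
      cases v with
      | inl i => simp [hedef, hg', hv]
      | inr i =>
          have h1 : Sum.inl i ∉ V := fun h => hno ⟨i, h, hv⟩
          simp [hedef, hg', h1, hv]
    · intro i
      by_cases h1 : Sum.inl i ∈ V
      · have : (X i : MvPolynomial (Fin n) (ZMod 2)) ∈ Ideal.span (e '' V) :=
          Ideal.subset_span ⟨Sum.inl i, h1, rfl⟩
        simpa [hg', h1] using this
      · by_cases h2 : Sum.inr i ∈ V
        · have hmem : (1 - X i : MvPolynomial (Fin n) (ZMod 2)) ∈ Ideal.span (e '' V) :=
            Ideal.subset_span ⟨Sum.inr i, h2, rfl⟩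
          have : (X i : MvPolynomial (Fin n) (ZMod 2)) - 1 = -(1 - X i) := by ring
          rw [hg']
          simp only [if_neg h1, if_pos h2]
          rw [this]
          exact (Ideal.neg_mem_iff _).mpr hmem
        · simp [hg', h1, h2]
  have hpprime : (Ideal.map (depol n) q).IsPrime := by
    rw [hmap, hpker]
    exact RingHom.ker_isPrime _
  -- A ≤ d(q)
  obtain ⟨G, hGps, hGspan⟩ := hA
  have hdpol : ∀ σ' τ' : Finset (Fin n), depol n (polMon n σ' τ') = psm n σ' τ' := by
    intro σ' τ'
    simp [depol, polMon, psm, map_mul, map_prod]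
  have hAle : A ≤ Ideal.map (depol n) q := by
    conv_lhs => rw [hGspan]
    rw [Ideal.span_le]
    intro g hg
    obtain ⟨σ', τ', hdisj, hgeq⟩ := hGps g hg
    have hgA : psm n σ' τ' ∈ A := by
      rw [← hgeq, hGspan]
      exact Ideal.subset_span hg
    have hpol : polMon n σ' τ' ∈ q :=
      hqA (Ideal.subset_span ⟨σ', τ', hdisj, hgA, rfl⟩)
    have := Ideal.mem_map_of_mem (depol n) hpol
    rw [hdpol] at this
    rw [hgeq]
    exact this
  -- key claim: for each variable v ∈ V there is a generator whose only V-variable is v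
  have claim : ∀ v ∈ V, ∃ σ' τ' : Finset (Fin n), Disjoint σ' τ' ∧ psm n σ' τ' ∈ A ∧
      ((∃ j ∈ σ', Sum.inl j = v) ∨ (∃ j ∈ τ', Sum.inr j = v)) ∧
      (∀ j ∈ σ', Sum.inl j ∈ V → Sum.inl j = v) ∧
      (∀ j ∈ τ', Sum.inr j ∈ V → Sum.inr j = v) := by
    intro v hv
    by_contra hC
    have hsubm : polIdeal A ≤ Ideal.span
        ((X : _ → MvPolynomial (Fin n ⊕ Fin n) (ZMod 2)) '' (V \ {v})) := by
      rw [polIdeal, Ideal.span_le]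
      rintro m ⟨σ', τ', hdisj, hpsm, rfl⟩
      have hmq : polMon n σ' τ' ∈ Ideal.span
          ((X : _ → MvPolynomial (Fin n ⊕ Fin n) (ZMod 2)) '' V) := by
        rw [← hqV]
        exact hqA (Ideal.subset_span ⟨σ', τ', hdisj, hpsm, rfl⟩)
      have hhit := hvar V σ' τ' hmq
      by_cases hother : (∃ j ∈ σ', Sum.inl j ∈ V \ {v}) ∨ (∃ j ∈ τ', Sum.inr j ∈ V \ {v})
      · rcases hother with ⟨j, hj, hjW⟩ | ⟨j, hj, hjW⟩
        · exact hmemvar _ σ' τ' _ hjW (Or.inl ⟨j, hj, rfl⟩)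
        · exact hmemvar _ σ' τ' _ hjW (Or.inr ⟨j, hj, rfl⟩)
      · exfalso
        push_neg at hother
        apply hC
        refine ⟨σ', τ', hdisj, hpsm, ?_, ?_, ?_⟩
        · rcases hhit with ⟨j, hj, hjV⟩ | ⟨j, hj, hjV⟩
          · left
            refine ⟨j, hj, ?_⟩
            have h := hother.1 j hj
            rw [Set.mem_diff, Set.mem_singleton_iff] at h
            by_contra hne
            exact h ⟨hjV, hne⟩
          · right
            refine ⟨j, hj, ?_⟩
            have h := hother.2 j hj
            rw [Set.mem_diff, Set.mem_singleton_iff] at h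
            by_contra hne
            exact h ⟨hjV, hne⟩
        · intro j hj hjV
          have h := hother.1 j hj
          rw [Set.mem_diff, Set.mem_singleton_iff] at h
          by_contra hne
          exact h ⟨hjV, hne⟩
        · intro j hj hjV
          have h := hother.2 j hj
          rw [Set.mem_diff, Set.mem_singleton_iff] at h
          by_contra hne
          exact h ⟨hjV, hne⟩
    have hle : Ideal.span ((X : _ → MvPolynomial (Fin n ⊕ Fin n) (ZMod 2)) '' (V \ {v})) ≤ q := by
      rw [hqV]
      exact Ideal.span_mono (Set.image_mono Set.diff_subset)
    have hqle := hqmin ⟨hprime _, hsubm⟩ hle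
    have hvX : (X v : MvPolynomial (Fin n ⊕ Fin n) (ZMod 2)) ∈ Ideal.span
        ((X : _ → MvPolynomial (Fin n ⊕ Fin n) (ZMod 2)) '' (V \ {v})) := hqle hv
    rw [hker, RingHom.mem_ker] at hvX
    have hnotin : v ∉ V \ {v} := by simp
    simp only [AlgHom.toRingHom_eq_coe, RingHom.coe_coe, aeval_X, if_neg hnotin] at hvX
    exact X_ne_zero _ hvX
  -- conclusion
  refine ⟨⟨hpprime, hAle⟩, ?_⟩
  intro b hb hble
  rw [hmap, Ideal.span_le]
  rintro t ⟨v, hv, rfl⟩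
  obtain ⟨σ', τ', hdisj, hpsmA, hhit, hul, hur⟩ := claim v hv
  have hpsmb : psm n σ' τ' ∈ b := hb.2 hpsmA
  cases v with
  | inl i =>
      -- e (inl i) = X i
      have hiσ : i ∈ σ' := by
        rcases hhit with ⟨j, hj, hje⟩ | ⟨j, hj, hje⟩
        · rwa [← Sum.inl.inj hje]
        · exact absurd hje (by simp)
      have hfeq : psm n σ' τ' =
          X i * ((∏ j ∈ σ'.erase i, X j) * ∏ j ∈ τ', (1 - X j)) := by
        rw [psm, ← Finset.mul_prod_erase _ _ hiσ, mul_assoc]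
      have hfb : X i * ((∏ j ∈ σ'.erase i, X j) * ∏ j ∈ τ', (1 - X j)) ∈ b := by
        rw [← hfeq]; exact hpsmb
      rcases hb.1.mem_or_mem hfb with h | h
      · simpa [hedef] using h
      · exfalso
        have hhp : ((∏ j ∈ σ'.erase i, X j) * ∏ j ∈ τ', (1 - X j)) ∈
            Ideal.map (depol n) q := hble h
        rw [hmap, hpker, RingHom.mem_ker] at hhp
        simp only [AlgHom.toRingHom_eq_coe, RingHom.coe_coe, map_mul, map_prod, map_sub,
          map_one, aeval_X] at hhp
        rcases mul_eq_zero.mp hhp with h0 | h0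
        · obtain ⟨j, hj, hj0⟩ := Finset.prod_eq_zero_iff.mp h0
          have hj1 : Sum.inl j ∉ V := by
            intro hmem
            have := hul j (Finset.mem_erase.mp hj).2 hmem
            exact (Finset.mem_erase.mp hj).1 (Sum.inl.inj this)
          rw [hg'] at hj0
          simp only [if_neg hj1] at hj0
          split at hj0
          · exact one_ne_zero hj0
          · exact X_ne_zero _ hj0
        · obtain ⟨j, hj, hj0⟩ := Finset.prod_eq_zero_iff.mp h0
          have hj2 : Sum.inr j ∉ V := by
            intro hmem
            exact absurd (hur j hj hmem) (by simp)
          rw [hg'] at hj0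
          simp only [if_neg hj2] at hj0
          split at hj0
          · simp at hj0
          · exact hsub1 j hj0
  | inr i =>
      have hiτ : i ∈ τ' := by
        rcases hhit with ⟨j, hj, hje⟩ | ⟨j, hj, hje⟩
        · exact absurd hje (by simp)
        · rwa [← Sum.inr.inj hje]
      have hfeq : psm n σ' τ' =
          (1 - X i) * ((∏ j ∈ σ', X j) * ∏ j ∈ τ'.erase i, (1 - X j)) := by
        rw [psm, ← Finset.mul_prod_erase _ _ hiτ]
        ring
      have hfb : (1 - X i) * ((∏ j ∈ σ', X j) * ∏ j ∈ τ'.erase i, (1 - X j)) ∈ b := by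
        rw [← hfeq]; exact hpsmb
      rcases hb.1.mem_or_mem hfb with h | h
      · simpa [hedef] using h
      · exfalso
        have hhp : ((∏ j ∈ σ', X j) * ∏ j ∈ τ'.erase i, (1 - X j)) ∈
            Ideal.map (depol n) q := hble h
        rw [hmap, hpker, RingHom.mem_ker] at hhp
        simp only [AlgHom.toRingHom_eq_coe, RingHom.coe_coe, map_mul, map_prod, map_sub,
          map_one, aeval_X] at hhp
        rcases mul_eq_zero.mp hhp with h0 | h0
        · obtain ⟨j, hj, hj0⟩ := Finset.prod_eq_zero_iff.mp h0
          have hj1 : Sum.inl j ∉ V := by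
            intro hmem
            exact absurd (hul j hj hmem) (by simp)
          rw [hg'] at hj0
          simp only [if_neg hj1] at hj0
          split at hj0
          · exact one_ne_zero hj0
          · exact X_ne_zero _ hj0
        · obtain ⟨j, hj, hj0⟩ := Finset.prod_eq_zero_iff.mp h0
          have hj2 : Sum.inr j ∉ V := by
            intro hmem
            have := hur j (Finset.mem_erase.mp hj).2 hmem
            exact (Finset.mem_erase.mp hj).1 (Sum.inr.inj this)
          rw [hg'] at hj0
          simp only [if_neg hj2] at hj0
          split at hj0
          · simp at hj0
          · exact hsub1 j hj0
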